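/- In the Frohman–Gelca algebra A_t (t nonzero, not a root of unity), the kernel of the parity map φ : A_t → ℂ⁵ equals C(A_t), the linear span of commutators. Consequently A_t / C(A_t) is a five-dimensional complex vector space. -/

import Mathlib

noncomputable section

def negRel : Setoid (ℤ × ℤ) where
  r v w := v = w ∨ v = -w
  iseqv := by
    refine ⟨fun v => Or.inl rfl, ?_, ?_⟩
    · rintro v w (rfl | rfl) <;> simp
    · rintro u v w (rfl | rfl) (h | h) <;> simp_all

/-- The index set `ℤ² / ±1`. -/
abbrev Q2 := Quotient negRel

/-- The underlying vector space of the Frohman–Gelca algebra: the free `ℂ`-module on `ℤ²/±1`. -/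
abbrev FG := Q2 →₀ ℂ

/-- The basis vector `e_{(p,q)}`. -/
def e (v : ℤ × ℤ) : FG := Finsupp.single (Quotient.mk negRel v) 1

lemma e_neg (v : ℤ × ℤ) : e (-v) = e v := by
  unfold e
  congr 1
  exact Quotient.sound (Or.inr rfl)

/-- The determinant `p s - q r`. -/
def det (v w : ℤ × ℤ) : ℤ := v.1 * w.2 - v.2 * w.1

/-- Product-to-sum formula on representatives. -/
def mulB (t : ℂ) (v w : ℤ × ℤ) : FG :=
  t ^ (det v w) • e (v + w) + t ^ (-(det v w)) • e (v - w)

lemma mulB_negL (t : ℂ) (v w : ℤ × ℤ) : mulB t (-v) w = mulB t v w := by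
  unfold mulB
  have hd : det (-v) w = -(det v w) := by simp [det]; ring
  rw [hd, neg_neg, show -v + w = -(v - w) by abel, show -v - w = -(v + w) by abel,
    e_neg, e_neg, add_comm]

lemma mulB_negR (t : ℂ) (v w : ℤ × ℤ) : mulB t v (-w) = mulB t v w := by
  unfold mulB
  have hd : det v (-w) = -(det v w) := by simp [det]; ring
  rw [hd, neg_neg, show v + -w = v - w by abel, show v - -w = v + w by abel, add_comm]

/-- Product-to-sum formula on the quotient `ℤ²/±1`. -/
def qmulB (t : ℂ) : Q2 → Q2 → FG :=
  Quotient.lift₂ (mulB t) (by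
    rintro a b a' b' (rfl | rfl) (rfl | rfl)
    · rfl
    · rw [mulB_negR]
    · rw [mulB_negL]
    · rw [mulB_negL, mulB_negR])

/-- Multiplication in the Frohman–Gelca algebra, extended bilinearly. -/
def fgMul (t : ℂ) (a b : FG) : FG :=
  a.sum fun x c => b.sum fun y d => (c * d) • qmulB t x y

/-- The span of commutators `C(A_t)`. -/
def commSpan (t : ℂ) : Submodule ℂ FG :=
  Submodule.span ℂ {x | ∃ a b : FG, x = fgMul t a b - fgMul t b a}


/-- The class of a pair: `0` for `(0,0)`, then `ee`, `eo`, `oe`, `oo`. -/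
def cls (v : ℤ × ℤ) : Fin 5 :=
  if v = 0 then 0
  else if Even v.1 then (if Even v.2 then 1 else 2)
  else if Even v.2 then 3 else 4

def qcls : Q2 → Fin 5 :=
  Quotient.lift cls (by
    rintro a b (rfl | rfl)
    · rfl
    · simp [cls, neg_eq_zero, Prod.fst_neg, Prod.snd_neg])

/-- The parity map `φ : A_t → ℂ⁵`. -/
def phiL : FG →ₗ[ℂ] (Fin 5 → ℂ) :=
  Finsupp.lsum ℂ fun x => LinearMap.toSpanSingleton ℂ (Fin 5 → ℂ) (Pi.single (qcls x) 1)


/-! ### Auxiliary lemmas -/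

lemma tsub_ne (t : ℂ) (ht : t ≠ 0) (hroot : ∀ n : ℕ, 0 < n → t ^ n ≠ 1)
    (d : ℤ) (hd : d ≠ 0) : t ^ d - t ^ (-d) ≠ 0 := by
  intro h
  have h1 : t ^ d = t ^ (-d) := sub_eq_zero.mp h
  have h2 : t ^ (d + d) = 1 := by
    calc t ^ (d + d) = t ^ d * t ^ d := zpow_add₀ ht d d
      _ = t ^ (-d) * t ^ d := by rw [← h1]
      _ = t ^ (-d + d) := (zpow_add₀ ht _ _).symm
      _ = 1 := by norm_num
  have hpos : 0 < (d + d).natAbs := by omega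
  apply hroot _ hpos
  rcases le_or_gt 0 (d + d) with hle | hlt
  · rw [← zpow_natCast, Int.natAbs_of_nonneg hle, h2]
  · have : ((d + d).natAbs : ℤ) = -(d + d) := by omega
    rw [← zpow_natCast, this, zpow_neg, h2, inv_one]

lemma cls_neg (u : ℤ × ℤ) : cls (-u) = cls u :=
  congrArg qcls (Quotient.sound (Or.inr rfl) : (Quotient.mk negRel (-u) : Q2) = Quotient.mk negRel u)

lemma cls_congr {u u' : ℤ × ℤ} (hu : u ≠ 0) (hu' : u' ≠ 0)
    (h1 : Even u.1 ↔ Even u'.1) (h2 : Even u.2 ↔ Even u'.2) : cls u = cls u' := by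
  have h1' : Even u.1 = Even u'.1 := propext h1
  have h2' : Even u.2 = Even u'.2 := propext h2
  simp only [cls, if_neg hu, if_neg hu', h1', h2']

lemma phiL_e (u : ℤ × ℤ) : phiL (e u) = Pi.single (cls u) 1 := by
  simp [phiL, e]
  rfl

lemma fgMul_e (t : ℂ) (v w : ℤ × ℤ) : fgMul t (e v) (e w) = mulB t v w := by
  unfold fgMul e
  rw [Finsupp.sum_single_index, Finsupp.sum_single_index]
  · simp only [one_mul, one_smul]; rfl
  · simp
  · simp

lemma comm_eq (t : ℂ) (v w : ℤ × ℤ) :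
    fgMul t (e v) (e w) - fgMul t (e w) (e v)
      = (t ^ det v w - t ^ (-det v w)) • (e (v + w) - e (v - w)) := by
  rw [fgMul_e, fgMul_e]
  unfold mulB
  have h1 : det w v = -det v w := by simp [det]; ring
  rw [h1, neg_neg, show w + v = v + w from add_comm w v,
      show w - v = -(v - w) by abel, e_neg]
  rw [smul_sub, sub_smul, sub_smul]
  abel

lemma diff_mem_det (t : ℂ) (ht : t ≠ 0) (hroot : ∀ n : ℕ, 0 < n → t ^ n ≠ 1)
    (v w : ℤ × ℤ) (hd : det v w ≠ 0) :
    e (v + w) - e (v - w) ∈ commSpan t := by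
  have hs : (t ^ det v w - t ^ (-det v w)) ≠ 0 := tsub_ne t ht hroot _ hd
  have hmem : fgMul t (e v) (e w) - fgMul t (e w) (e v) ∈ commSpan t :=
    Submodule.subset_span ⟨e v, e w, rfl⟩
  rw [comm_eq] at hmem
  have h2 := Submodule.smul_mem (commSpan t) (t ^ det v w - t ^ (-det v w))⁻¹ hmem
  rwa [smul_smul, inv_mul_cancel₀ hs, one_smul] at h2

lemma diff_mem_of_det (t : ℂ) (ht : t ≠ 0) (hroot : ∀ n : ℕ, 0 < n → t ^ n ≠ 1)
    {u u' : ℤ × ℤ}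
    (h1 : Even u.1 ↔ Even u'.1) (h2 : Even u.2 ↔ Even u'.2)
    (hd : det u u' ≠ 0) : e u - e u' ∈ commSpan t := by
  obtain ⟨a, ha⟩ : Even (u.1 + u'.1) := Int.even_add.mpr h1
  obtain ⟨b, hb⟩ : Even (u.2 + u'.2) := Int.even_add.mpr h2
  obtain ⟨c, hc⟩ : Even (u.1 - u'.1) := Int.even_sub.mpr h1
  obtain ⟨d, hdd⟩ : Even (u.2 - u'.2) := Int.even_sub.mpr h2
  have huvw : u = (a, b) + (c, d) := by
    have : u.1 = a + c ∧ u.2 = b + d := by constructor <;> omega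
    ext <;> simp [this.1, this.2]
  have huvw' : u' = (a, b) - (c, d) := by
    have : u'.1 = a - c ∧ u'.2 = b - d := by constructor <;> omega
    ext <;> simp [this.1, this.2]
  have hdvw : det (a, b) (c, d) ≠ 0 := by
    intro h0
    apply hd
    have hde : det (a,b) (c,d) = a * d - b * c := rfl
    have : det u u' = u.1 * u'.2 - u.2 * u'.1 := rfl
    rw [this]
    have e1 : u.1 = a + c := by omega
    have e2 : u.2 = b + d := by omega
    have e3 : u'.1 = a - c := by omega
    have e4 : u'.2 = b - d := by omega
    rw [e1, e2, e3, e4]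
    rw [hde] at h0
    nlinarith [h0]
  rw [huvw, huvw']
  exact diff_mem_det t ht hroot _ _ hdvw

lemma diff_mem (t : ℂ) (ht : t ≠ 0) (hroot : ∀ n : ℕ, 0 < n → t ^ n ≠ 1)
    {u u' : ℤ × ℤ} (hu : u ≠ 0) (hu' : u' ≠ 0)
    (h1 : Even u.1 ↔ Even u'.1) (h2 : Even u.2 ↔ Even u'.2) :
    e u - e u' ∈ commSpan t := by
  by_cases hd : det u u' ≠ 0
  · exact diff_mem_of_det t ht hroot h1 h2 hd
  push_neg at hd
  -- parallel case: go through an auxiliary vector z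
  set z : ℤ × ℤ := (u'.1 + 2 * u'.2, u'.2 - 2 * u'.1) with hz
  have hz1 : z.1 = u'.1 + 2 * u'.2 := rfl
  have hz2 : z.2 = u'.2 - 2 * u'.1 := rfl
  have hu'sq : u'.1 * u'.1 + u'.2 * u'.2 ≠ 0 := by
    intro h0
    apply hu'
    have : u'.1 = 0 ∧ u'.2 = 0 := by constructor <;> nlinarith [sq_nonneg u'.1, sq_nonneg u'.2]
    ext <;> simp [this.1, this.2]
  have husq : u.1 * u.1 + u.2 * u.2 ≠ 0 := by
    intro h0
    apply hu
    have : u.1 = 0 ∧ u.2 = 0 := by constructor <;> nlinarith [sq_nonneg u.1, sq_nonneg u.2]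
    ext <;> simp [this.1, this.2]
  have hdet1 : det u' z ≠ 0 := by
    have : det u' z = -2 * (u'.1 * u'.1 + u'.2 * u'.2) := by
      simp only [det, hz1, hz2]; ring
    rw [this]
    intro h0
    exact hu'sq (by omega)
  have hdet2 : det u z ≠ 0 := by
    have hd0 : u.1 * u'.2 - u.2 * u'.1 = 0 := hd
    have hinner : u.1 * u'.1 + u.2 * u'.2 ≠ 0 := by
      intro h0
      apply hu'sq
      have k1 : u'.1 * (u.1 * u.1 + u.2 * u.2) = 0 := by linear_combination u.1 * h0 - u.2 * hd0
      have k2 : u'.2 * (u.1 * u.1 + u.2 * u.2) = 0 := by linear_combination u.2 * h0 + u.1 * hd0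
      have j1 : u'.1 = 0 := by
        rcases mul_eq_zero.mp k1 with h | h
        · exact h
        · exact absurd h husq
      have j2 : u'.2 = 0 := by
        rcases mul_eq_zero.mp k2 with h | h
        · exact h
        · exact absurd h husq
      rw [j1, j2]; ring
    have : det u z = det u u' - 2 * (u.1 * u'.1 + u.2 * u'.2) := by
      simp only [det, hz1, hz2]; ring
    rw [this, hd]
    intro h0
    exact hinner (by omega)
  have hez1 : Even z.1 ↔ Even u'.1 := by rw [hz1, Int.even_add]; simp [Int.even_mul]
  have hez2 : Even z.2 ↔ Even u'.2 := by rw [hz2, Int.even_sub]; simp [Int.even_mul]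
  have m1 : e u - e z ∈ commSpan t :=
    diff_mem_of_det t ht hroot (h1.trans hez1.symm) (h2.trans hez2.symm) hdet2
  have m2 : e u' - e z ∈ commSpan t :=
    diff_mem_of_det t ht hroot hez1.symm hez2.symm hdet1
  have := Submodule.sub_mem (commSpan t) m1 m2
  simpa using this

/-- Representatives of the five classes. -/
def R5 : Fin 5 → Q2 :=
  ![Quotient.mk negRel (0, 0), Quotient.mk negRel (2, 0), Quotient.mk negRel (0, 1),
    Quotient.mk negRel (1, 0), Quotient.mk negRel (1, 1)]

def E (q : Q2) : FG := Finsupp.single q 1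

lemma qcls_R5 : ∀ c : Fin 5, qcls (R5 c) = c := by
  intro c
  fin_cases c <;> simp [R5, qcls, cls] <;> decide

lemma key_diff (t : ℂ) (ht : t ≠ 0) (hroot : ∀ n : ℕ, 0 < n → t ^ n ≠ 1) (q : Q2) :
    E q - E (R5 (qcls q)) ∈ commSpan t := by
  induction q using Quotient.ind with
  | _ u =>
    have hq : qcls (Quotient.mk negRel u) = cls u := rfl
    have hE : E (Quotient.mk negRel u) = e u := rfl
    by_cases hu : u = 0
    · subst hu
      have h : E (R5 (qcls (Quotient.mk negRel (0 : ℤ × ℤ)))) = E (Quotient.mk negRel (0 : ℤ × ℤ)) := rfl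
      rw [h, sub_self]
      exact zero_mem _
    · rw [hq, hE]
      by_cases e1 : Even u.1 <;> by_cases e2 : Even u.2
      · have hc : cls u = 1 := by simp [cls, hu, e1, e2]
        rw [hc]
        have : E (R5 1) = e (2, 0) := rfl
        rw [this]
        exact diff_mem t ht hroot hu (by decide) (by simpa using e1) (by simpa using e2)
      · have hc : cls u = 2 := by simp [cls, hu, e1, e2]
        rw [hc]
        have : E (R5 2) = e (0, 1) := rfl
        rw [this]
        exact diff_mem t ht hroot hu (by decide) (by simpa using e1) (by simpa using e2)
      · have hc : cls u = 3 := by simp [cls, hu, e1, e2]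
        rw [hc]
        have : E (R5 3) = e (1, 0) := rfl
        rw [this]
        exact diff_mem t ht hroot hu (by decide) (by simpa using e1) (by simpa using e2)
      · have hc : cls u = 4 := by simp [cls, hu, e1, e2]
        rw [hc]
        have : E (R5 4) = e (1, 1) := rfl
        rw [this]
        exact diff_mem t ht hroot hu (by decide) (by simpa using e1) (by simpa using e2)

def L5 : (Fin 5 → ℂ) →ₗ[ℂ] FG :=
  ∑ c : Fin 5, (LinearMap.toSpanSingleton ℂ FG (E (R5 c))).comp (LinearMap.proj c)

lemma L5_apply (f : Fin 5 → ℂ) : L5 f = ∑ c : Fin 5, f c • E (R5 c) := by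
  simp [L5, LinearMap.sum_apply]

def psi : FG →ₗ[ℂ] FG :=
  Finsupp.lsum ℂ fun q => LinearMap.toSpanSingleton ℂ FG (E (R5 (qcls q)))

lemma psi_eq : psi = L5.comp phiL := by
  apply Finsupp.lhom_ext
  intro q c
  simp [psi, phiL, L5_apply, Pi.single_apply, smul_smul]

lemma phiL_qmulB_symm (t : ℂ) (x y : Q2) : phiL (qmulB t x y) = phiL (qmulB t y x) := by
  induction x using Quotient.ind with
  | _ v =>
  induction y using Quotient.ind with
  | _ w =>
  have hx : qmulB t (Quotient.mk negRel v) (Quotient.mk negRel w) = mulB t v w := rfl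
  have hy : qmulB t (Quotient.mk negRel w) (Quotient.mk negRel v) = mulB t w v := rfl
  rw [hx, hy]
  unfold mulB
  have h1 : det w v = -det v w := by simp [det]; ring
  rw [h1, neg_neg, show w + v = v + w from add_comm w v,
      show w - v = -(v - w) by abel, e_neg]
  by_cases hd : det v w = 0
  · rw [hd]; simp
  · have hvw : v + w ≠ 0 := by
      intro h0
      apply hd
      have c1 : v.1 + w.1 = 0 := by simpa using congrArg Prod.fst h0
      have c2 : v.2 + w.2 = 0 := by simpa using congrArg Prod.snd h0
      show v.1 * w.2 - v.2 * w.1 = 0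
      linear_combination v.1 * c2 - v.2 * c1
    have hvw' : v - w ≠ 0 := by
      intro h0
      apply hd
      have c1 : v.1 - w.1 = 0 := by simpa using congrArg Prod.fst h0
      have c2 : v.2 - w.2 = 0 := by simpa using congrArg Prod.snd h0
      show v.1 * w.2 - v.2 * w.1 = 0
      linear_combination v.2 * c1 - v.1 * c2
    have hcls : cls (v + w) = cls (v - w) := by
      apply cls_congr hvw hvw'
      · simp only [Prod.fst_add, Prod.fst_sub]
        rw [Int.even_add, Int.even_sub]
      · simp only [Prod.snd_add, Prod.snd_sub]
        rw [Int.even_add, Int.even_sub]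
    simp only [map_add, map_smul, phiL_e, hcls]
    abel

lemma phiL_fgMul_symm (t : ℂ) (a b : FG) : phiL (fgMul t a b) = phiL (fgMul t b a) := by
  unfold fgMul
  rw [map_finsuppSum, map_finsuppSum]
  simp only [map_finsuppSum, map_smul]
  rw [Finsupp.sum_comm]
  apply Finsupp.sum_congr
  intro y _
  apply Finsupp.sum_congr
  intro x _
  rw [mul_comm, phiL_qmulB_symm]

lemma phiL_surj : Function.Surjective phiL := by
  intro f
  refine ⟨L5 f, ?_⟩
  rw [L5_apply, map_sum]
  have hE : ∀ c : Fin 5, phiL (E (R5 c)) = Pi.single c 1 := by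
    intro c
    have : phiL (E (R5 c)) = Pi.single (qcls (R5 c)) 1 := by
      simp [phiL, E]
    rw [this, qcls_R5]
  ext j
  simp only [map_smul, Finset.sum_apply, Pi.smul_apply, hE, Pi.single_apply, smul_eq_mul,
    mul_ite, mul_one, mul_zero]
  simp [Finset.sum_ite_eq']

theorem stmt10 (t : ℂ) (ht : t ≠ 0) (hroot : ∀ n : ℕ, 0 < n → t ^ n ≠ 1) :
    LinearMap.ker phiL = commSpan t ∧
      Module.finrank ℂ (FG ⧸ commSpan t) = 5 := by
  have hker : LinearMap.ker phiL = commSpan t := by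
    apply le_antisymm
    · intro x hx
      have hx0 : phiL x = 0 := hx
      have h1 : x.sum (fun q c => c • E q) = x := by
        conv_rhs => rw [← Finsupp.sum_single x]
        apply Finsupp.sum_congr
        intro q _
        rw [E, Finsupp.smul_single, smul_eq_mul, mul_one]
      have h2 : x.sum (fun q c => c • E (R5 (qcls q))) = 0 := by
        have hpsi : psi x = x.sum fun q c => c • E (R5 (qcls q)) := by
          rw [psi, Finsupp.lsum_apply]
          apply Finsupp.sum_congr
          intro q _
          rw [LinearMap.toSpanSingleton_apply]
        rw [← hpsi, psi_eq, LinearMap.comp_apply, hx0, map_zero]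
      have hrepr : x = x.sum fun q c => c • (E q - E (R5 (qcls q))) := by
        have h3 : (x.sum fun q c => c • (E q - E (R5 (qcls q))))
            = x.sum (fun q c => c • E q) - x.sum (fun q c => c • E (R5 (qcls q))) := by
          rw [← Finsupp.sum_sub]
          apply Finsupp.sum_congr
          intro q _
          rw [smul_sub]
        rw [h3, h1, h2, sub_zero]
      rw [hrepr]
      exact Submodule.finsuppSum_mem ℂ (commSpan t) x _ fun q hq => Submodule.smul_mem _ _ (key_diff t ht hroot q)
    · rw [commSpan, Submodule.span_le]
      rintro x ⟨a, b, rfl⟩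
      simp only [SetLike.mem_coe, LinearMap.mem_ker, map_sub]
      rw [phiL_fgMul_symm]
      simp
  refine ⟨hker, ?_⟩
  rw [← hker]
  have equiv := phiL.quotKerEquivOfSurjective phiL_surj
  rw [equiv.finrank_eq]
  simp [Module.finrank_fin_fun]


end
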